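/- arXiv:2604.19187 — 2 statements merged into one kernel-verified Lean document; each statement's English description precedes it below -/
import Mathlib

section
/- Let α, β, γ : ℝ → ℝ be bounded measurable functions with β, γ nonnegative, let c ≥ 0 be a constant, and define ϑ_t = ∫_{-∞}^t exp(2∫_u^t (α_r + β_r) dr) (2γ_u + c) du, assumed finite for all t. Then for all t ∈ ℝ, ∫_{-∞}^t exp(2∫_u^t α_r dr) (2β_u ϑ_u + 2γ_u + c) du = ϑ_t. -/
open MeasureTheory Real Set
open scoped ENNReal
section
variable {β : ℝ → ℝ} {Mβ : ℝ}

-- copy of helpers assumed available via a.lean; for testing, reimport by pasting later.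

section helpers
variable {f : ℝ → ℝ} {M : ℝ}

lemma bdd_integrableOn (hf : Measurable f) (hb : ∀ x, |f x| ≤ M) {s : Set ℝ}
    (hs : volume s < ⊤) : IntegrableOn f s := by
  have hc : Integrable (fun _ => M) (volume.restrict s) :=
    integrable_const_iff.2 (Or.inr ⟨by simpa [Measure.restrict_apply_univ] using hs⟩)
  exact Integrable.mono' hc hf.aestronglyMeasurable.restrict
    (Filter.Eventually.of_forall fun x => by simpa using hb x)

lemma bdd_intervalIntegrable (hf : Measurable f) (hb : ∀ x, |f x| ≤ M) (a b : ℝ) :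
    IntervalIntegrable f volume a b := by
  rw [intervalIntegrable_iff]
  exact bdd_integrableOn hf hb measure_Ioc_lt_top

/-- primitive difference equals interval integral -/
lemma primitive_sub (hf : Measurable f) (hb : ∀ x, |f x| ≤ M) (s u : ℝ) :
    (∫ r in s..u, f r) = (∫ r in (0:ℝ)..u, f r) - ∫ r in (0:ℝ)..s, f r := by
  rw [eq_sub_iff_add_eq, add_comm]
  exact intervalIntegral.integral_add_adjacent_intervals
    (bdd_intervalIntegrable hf hb 0 s) (bdd_intervalIntegrable hf hb s u)

lemma primitive_continuous (hf : Measurable f) (hb : ∀ x, |f x| ≤ M) :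
    Continuous (fun x => ∫ r in (0:ℝ)..x, f r) :=
  intervalIntegral.continuous_primitive (fun a b => bdd_intervalIntegrable hf hb a b) 0

lemma primitive_mono (hf : Measurable f) (hb : ∀ x, |f x| ≤ M) (h0 : ∀ x, 0 ≤ f x) :
    Monotone (fun x => ∫ r in (0:ℝ)..x, f r) := by
  intro a b hab
  have : (∫ r in (0:ℝ)..b, f r) - (∫ r in (0:ℝ)..a, f r) = ∫ r in a..b, f r :=
    (primitive_sub hf hb a b).symm
  have h2 : 0 ≤ ∫ r in a..b, f r :=
    intervalIntegral.integral_nonneg hab (fun u _ => h0 u)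
  linarith

lemma primitive_diff_le (hf : Measurable f) (hb : ∀ x, |f x| ≤ M) {a b : ℝ} (hab : a ≤ b) :
    (∫ r in (0:ℝ)..b, f r) - (∫ r in (0:ℝ)..a, f r) ≤ M * (b - a) := by
  rw [← primitive_sub hf hb]
  calc (∫ r in a..b, f r) ≤ ∫ r in a..b, M := by
        apply intervalIntegral.integral_mono_on hab (bdd_intervalIntegrable hf hb a b)
          intervalIntegrable_const
        intro x _; exact (abs_le.1 (hb x)).2
    _ = M * (b - a) := by simp [mul_comm]

lemma primitive_integral_Ioc (hf : Measurable f) (hb : ∀ x, |f x| ≤ M) {a b : ℝ} (hab : a ≤ b) :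
    (∫ r in Ioc a b, f r) = (∫ r in (0:ℝ)..b, f r) - (∫ r in (0:ℝ)..a, f r) := by
  rw [← primitive_sub hf hb, intervalIntegral.integral_of_le hab]

end helpers

lemma bdd_on_integrableOn {f : ℝ → ℝ} (hf : Measurable f) {s : Set ℝ} (hs : MeasurableSet s)
    (hvol : volume s < ⊤) {C : ℝ} (hb : ∀ x ∈ s, |f x| ≤ C) : IntegrableOn f s := by
  have hc : Integrable (fun _ => C) (volume.restrict s) :=
    integrable_const_iff.2 (Or.inr ⟨by simpa [Measure.restrict_apply_univ] using hvol⟩)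
  exact Integrable.mono' hc hf.aestronglyMeasurable.restrict
    ((ae_restrict_iff' hs).2 (Filter.Eventually.of_forall fun x hx => by
      simpa using hb x hx))

lemma bdd_on_integrable_prod {F : ℝ × ℝ → ℝ} (hF : Measurable F) {A B : Set ℝ}
    (hA : MeasurableSet A) (hB : MeasurableSet B) (hvA : volume A < ⊤) (hvB : volume B < ⊤)
    {C : ℝ} (hb : ∀ p ∈ A ×ˢ B, |F p| ≤ C) :
    Integrable F ((volume.restrict A).prod (volume.restrict B)) := by
  rw [Measure.prod_restrict]
  have hc : Integrable (fun _ : ℝ × ℝ => C) ((volume.prod volume).restrict (A ×ˢ B)) := by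
    refine integrable_const_iff.2 (Or.inr ⟨?_⟩)
    rw [Measure.restrict_apply_univ, Measure.prod_prod]
    exact ENNReal.mul_lt_top hvA hvB
  exact Integrable.mono' hc hF.aestronglyMeasurable.restrict
    ((ae_restrict_iff' (hA.prod hB)).2 (Filter.Eventually.of_forall fun p hp => by
      simpa using hb p hp))

lemma power_id (hβm : Measurable β) (hβb : ∀ x, |β x| ≤ Mβ) (hβ0 : ∀ x, 0 ≤ β x)
    (P : ℝ → ℝ) (hP : ∀ x, P x = ∫ r in (0:ℝ)..x, β r) (s : ℝ) :
    ∀ (k : ℕ) (t : ℝ), s ≤ t →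
    (∫ u in Ioc s t, β u * (P u - P s)^k) = (P t - P s)^(k+1) / (k+1) := by
  have hMβ0 : 0 ≤ Mβ := le_trans (abs_nonneg _) (hβb 0)
  have hPfun : P = fun x => ∫ r in (0:ℝ)..x, β r := funext hP
  have hPc : Continuous P := hPfun ▸ primitive_continuous hβm hβb
  have hPm : Monotone P := hPfun ▸ primitive_mono hβm hβb hβ0
  have hPioc : ∀ a b : ℝ, a ≤ b → (∫ r in Ioc a b, β r) = P b - P a := by
    intro a b hab
    rw [hP, hP]
    exact primitive_integral_Ioc hβm hβb hab
  have hPdiff : ∀ a b : ℝ, a ≤ b → P b - P a ≤ Mβ * (b - a) := by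
    intro a b hab
    rw [hP, hP]
    exact primitive_diff_le hβm hβb hab
  intro k
  induction k with
  | zero =>
    intro t hst
    simpa using hPioc s t hst
  | succ k IH =>
    intro t hst
    set C : ℝ := Mβ * (t - s) with hC
    have hC0 : 0 ≤ C := mul_nonneg hMβ0 (by linarith)
    have hPbd : ∀ v ∈ Ioc s t, 0 ≤ P v - P s ∧ P v - P s ≤ C := by
      intro v hv
      constructor
      · have := hPm hv.1.le; linarith
      · calc P v - P s ≤ Mβ * (v - s) := hPdiff s v hv.1.le
          _ ≤ C := by rw [hC]; nlinarith [hv.2, hMβ0]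
    set g : ℝ → ℝ := fun v => β v * (P v - P s)^k with hg
    have hg_meas : Measurable g := hβm.mul (((hPc.measurable).sub measurable_const).pow_const _)
    have hg_bd : ∀ v ∈ Ioc s t, |g v| ≤ Mβ * C^k := by
      intro v hv
      obtain ⟨h1, h2⟩ := hPbd v hv
      rw [hg, abs_mul, abs_pow, abs_of_nonneg h1]
      exact mul_le_mul (hβb v) (pow_le_pow_left₀ h1 h2 k) (by positivity) hMβ0
    set F : ℝ → ℝ → ℝ := fun u v => if v ≤ u then β u * g v else 0 with hF
    have hF_meas : Measurable (Function.uncurry F) := by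
      have : Function.uncurry F = fun p : ℝ × ℝ =>
          Set.indicator {p : ℝ × ℝ | p.2 ≤ p.1} (fun p => β p.1 * g p.2) p := by
        ext p
        by_cases h : p.2 ≤ p.1 <;>
          simp [Function.uncurry, hF, h, Set.indicator_apply, Set.mem_setOf_eq]
      rw [this]
      exact ((hβm.comp measurable_fst).mul (hg_meas.comp measurable_snd)).indicator
        (isClosed_le continuous_snd continuous_fst).measurableSet
    have hF_int : Integrable (Function.uncurry F)
        ((volume.restrict (Ioc s t)).prod (volume.restrict (Ioc s t))) := by
      refine bdd_on_integrable_prod hF_meas measurableSet_Ioc measurableSet_Ioc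
        measure_Ioc_lt_top measure_Ioc_lt_top (C := Mβ * (Mβ * C^k)) ?_
      rintro ⟨u, v⟩ ⟨hu, hv⟩
      simp only [Function.uncurry, hF]
      by_cases h : v ≤ u
      · rw [if_pos h, abs_mul]
        exact mul_le_mul (hβb u) (hg_bd v hv) (abs_nonneg _) hMβ0
      · rw [if_neg h, abs_zero]; positivity
    -- step 1: rewrite integrand using IH
    have hk1 : ((k:ℝ) + 1) ≠ 0 := by positivity
    have step1 : (∫ u in Ioc s t, β u * (P u - P s)^(k+1))
        = ((k:ℝ)+1) * ∫ u in Ioc s t, ∫ v in Ioc s t, F u v := by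
      rw [← integral_const_mul]
      refine setIntegral_congr_fun measurableSet_Ioc (fun u hu => ?_)
      have hIH : (∫ v in Ioc s u, g v) = (P u - P s)^(k+1) / ((k:ℝ)+1) := by
        simpa [hg] using IH u hu.1.le
      have inner : (∫ v in Ioc s t, F u v) = β u * ∫ v in Ioc s u, g v := by
        have : ∀ v, F u v = (Iic u).indicator (fun v => β u * g v) v := by
          intro v
          by_cases h : v ≤ u <;> simp [hF, Set.indicator_apply, h]
        simp_rw [this]
        rw [setIntegral_indicator measurableSet_Iic, Ioc_inter_Iic, min_eq_right hu.2,
          integral_const_mul]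
      rw [inner, hIH]
      field_simp
    -- step 2: swap
    have step2 : (∫ u in Ioc s t, ∫ v in Ioc s t, F u v)
        = ∫ v in Ioc s t, ∫ u in Ioc s t, F u v := by
      exact MeasureTheory.integral_integral_swap hF_int
    -- step 3: compute inner integral over u
    have step3 : (∫ v in Ioc s t, ∫ u in Ioc s t, F u v)
        = ∫ v in Ioc s t, ((P t - P s) * g v - g v * (P v - P s)) := by
      refine setIntegral_congr_fun measurableSet_Ioc (fun v hv => ?_)
      have h1 : ∀ u, F u v = (Ici v).indicator β u * g v := by
        intro u
        by_cases h : v ≤ u <;> simp [hF, Set.indicator_apply, h]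
      have hset : Ioc s t ∩ Ici v = Icc v t := by
        ext u
        simp only [mem_inter_iff, mem_Ioc, mem_Ici, mem_Icc]
        constructor
        · rintro ⟨⟨_, h2⟩, h3⟩; exact ⟨h3, h2⟩
        · rintro ⟨h1', h2⟩; exact ⟨⟨lt_of_lt_of_le hv.1 h1', h2⟩, h1'⟩
      simp_rw [h1]
      rw [integral_mul_const, setIntegral_indicator measurableSet_Ici, hset,
        MeasureTheory.integral_Icc_eq_integral_Ioc, hPioc v t hv.2]
      ring
    -- step 4: split and use IH at t
    have h_int1 : IntegrableOn (fun v => (P t - P s) * g v) (Ioc s t) := by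
      refine bdd_on_integrableOn (measurable_const.mul hg_meas) measurableSet_Ioc
        measure_Ioc_lt_top (C := |P t - P s| * (Mβ * C^k)) (fun v hv => ?_)
      simp only [Pi.mul_apply, Pi.sub_apply]
      rw [abs_mul]
      exact mul_le_mul_of_nonneg_left (hg_bd v hv) (abs_nonneg _)
    have h_int2 : IntegrableOn (fun v => g v * (P v - P s)) (Ioc s t) := by
      refine bdd_on_integrableOn (hg_meas.mul ((hPc.measurable).sub measurable_const))
        measurableSet_Ioc measure_Ioc_lt_top (C := (Mβ * C^k) * C) (fun v hv => ?_)
      simp only [Pi.mul_apply, Pi.sub_apply]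
      rw [abs_mul]
      exact mul_le_mul (hg_bd v hv) (by rw [abs_of_nonneg (hPbd v hv).1]; exact (hPbd v hv).2)
        (abs_nonneg _) (by positivity)
    have step4 : (∫ v in Ioc s t, ((P t - P s) * g v - g v * (P v - P s)))
        = (P t - P s) * ((P t - P s)^(k+1) / ((k:ℝ)+1))
          - ∫ v in Ioc s t, β v * (P v - P s)^(k+1) := by
      rw [integral_sub h_int1 h_int2, integral_const_mul]
      have hIHt : (∫ v in Ioc s t, g v) = (P t - P s)^(k+1) / ((k:ℝ)+1) := by
        simpa [hg] using IH t hst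
      rw [hIHt]
      congr 1
      refine setIntegral_congr_fun measurableSet_Ioc (fun v _ => ?_)
      simp [hg]; ring
    -- combine
    set I : ℝ := ∫ u in Ioc s t, β u * (P u - P s)^(k+1) with hI
    have key : I = ((k:ℝ)+1) * ((P t - P s) * ((P t - P s)^(k+1) / ((k:ℝ)+1)) - I) := by
      conv_lhs => rw [step1]
      rw [step2, step3, step4]
    have hx : (P t - P s) * (P t - P s)^(k+1) = (P t - P s)^(k+1+1) := by ring
    have h2 : ((k:ℝ) + 1 + 1) ≠ 0 := by positivity
    push_cast
    rw [eq_div_iff h2]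
    field_simp at key
    linarith [key, hx]
end

section
variable {β : ℝ → ℝ} {Mβ : ℝ}

lemma exp_id (hβm : Measurable β) (hβb : ∀ x, |β x| ≤ Mβ) (hβ0 : ∀ x, 0 ≤ β x)
    (P : ℝ → ℝ) (hP : ∀ x, P x = ∫ r in (0:ℝ)..x, β r) {s t : ℝ} (hst : s ≤ t) :
    (∫ u in Ioc s t, 2 * β u * Real.exp (2 * (P u - P s)))
      = Real.exp (2 * (P t - P s)) - 1 := by
  have hMβ0 : 0 ≤ Mβ := le_trans (abs_nonneg _) (hβb 0)
  have hPfun : P = fun x => ∫ r in (0:ℝ)..x, β r := funext hP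
  have hPc : Continuous P := hPfun ▸ primitive_continuous hβm hβb
  have hPm : Monotone P := hPfun ▸ primitive_mono hβm hβb hβ0
  have hPdiff : ∀ a b : ℝ, a ≤ b → P b - P a ≤ Mβ * (b - a) := by
    intro a b hab; rw [hP, hP]; exact primitive_diff_le hβm hβb hab
  set C : ℝ := Mβ * (t - s) with hC
  have hC0 : 0 ≤ C := mul_nonneg hMβ0 (by linarith)
  have hPbd : ∀ v ∈ Ioc s t, 0 ≤ P v - P s ∧ P v - P s ≤ C := by
    intro v hv
    refine ⟨by have := hPm hv.1.le; linarith, ?_⟩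
    calc P v - P s ≤ Mβ * (v - s) := hPdiff s v hv.1.le
      _ ≤ C := by rw [hC]; nlinarith [hv.2, hMβ0]
  have hexp : ∀ x : ℝ, Real.exp x = ∑' n : ℕ, x ^ n / n.factorial := by
    intro x
    rw [Real.exp_eq_exp_ℝ, NormedSpace.exp_eq_tsum_div]
  set h : ℕ → ℝ → ℝ := fun k u => (2 * β u) * ((2 * (P u - P s)) ^ k / k.factorial) with hh
  have hpt : ∀ u, 2 * β u * Real.exp (2 * (P u - P s)) = ∑' k, h k u := by
    intro u
    rw [hexp]
    exact tsum_mul_left.symm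
  have h_meas : ∀ k, Measurable (h k) := by
    intro k
    exact (measurable_const.mul hβm).mul
      (((measurable_const.mul (hPc.measurable.sub measurable_const)).pow_const _).div_const _)
  have hb : ∀ k, ∀ u ∈ Ioc s t, |h k u| ≤ 2 * Mβ * ((2*C) ^ k / k.factorial) := by
    intro k u hu
    obtain ⟨h1, h2⟩ := hPbd u hu
    rw [hh, abs_mul, abs_div, abs_pow]
    have e1 : |2 * β u| ≤ 2 * Mβ := by
      rw [abs_mul, abs_two]; exact mul_le_mul_of_nonneg_left (hβb u) (by norm_num)
    have e2 : |2 * (P u - P s)| ^ k / |(k.factorial : ℝ)| ≤ (2*C) ^ k / k.factorial := by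
      rw [abs_of_nonneg (by positivity : (0:ℝ) ≤ (k.factorial : ℝ))]
      apply div_le_div_of_nonneg_right ?_ (by positivity)
      · refine pow_le_pow_left₀ (abs_nonneg _) ?_ k
        rw [abs_of_nonneg (by linarith : (0:ℝ) ≤ 2 * (P u - P s))]
        linarith
    exact mul_le_mul e1 e2 (by positivity) (by positivity)
  have hsummable : Summable (fun k : ℕ => 2 * Mβ * ((2*C) ^ k / k.factorial)) :=
    (Real.summable_pow_div_factorial (2*C)).mul_left _
  -- swap integral and sum
  have hswap : (∫ u in Ioc s t, ∑' k, h k u) = ∑' k, ∫ u in Ioc s t, h k u := by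
    refine integral_tsum (fun k => (h_meas k).aestronglyMeasurable.restrict) ?_
    have hle : ∀ k : ℕ, (∫⁻ u in Ioc s t, ‖h k u‖₊)
        ≤ ENNReal.ofReal (2 * Mβ * ((2*C) ^ k / k.factorial)) * volume (Ioc s t) := by
      intro k
      have : (∫⁻ u in Ioc s t, ‖h k u‖₊)
          ≤ ∫⁻ _ in Ioc s t, ENNReal.ofReal (2 * Mβ * ((2*C) ^ k / k.factorial)) := by
        refine setLIntegral_mono measurable_const (fun u hu => ?_)
        rw [← enorm_eq_nnnorm, ← ofReal_norm]
        exact ENNReal.ofReal_le_ofReal (by simpa using hb k u hu)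
      simpa [Measure.restrict_apply_univ] using this
    refine ne_of_lt (lt_of_le_of_lt (ENNReal.tsum_le_tsum hle) ?_)
    rw [ENNReal.tsum_mul_right, ← ENNReal.ofReal_tsum_of_nonneg
      (fun k => by positivity) hsummable]
    exact ENNReal.mul_lt_top ENNReal.ofReal_lt_top measure_Ioc_lt_top
  -- value of each summand
  have hval : ∀ k : ℕ, (∫ u in Ioc s t, h k u)
      = (2 * (P t - P s)) ^ (k+1) / (k+1).factorial := by
    intro k
    have e1 : ∀ u, h k u = (2 * 2^k / k.factorial) * (β u * (P u - P s)^k) := by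
      intro u
      simp only [hh]
      rw [mul_pow]
      field_simp
    simp_rw [e1]
    rw [integral_const_mul, power_id hβm hβb hβ0 P hP s k t hst]
    rw [Nat.factorial_succ, mul_pow]
    push_cast
    have h1 : ((k.factorial : ℝ)) ≠ 0 := by positivity
    have h2 : ((k:ℝ) + 1) ≠ 0 := by positivity
    field_simp
    ring
  -- sum of the values
  have hsum2 : (∑' k : ℕ, (2 * (P t - P s)) ^ (k+1) / ((k+1).factorial : ℝ))
      = Real.exp (2 * (P t - P s)) - 1 := by
    have hs : Summable (fun n : ℕ => (2 * (P t - P s)) ^ n / (n.factorial : ℝ)) :=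
      Real.summable_pow_div_factorial _
    have := Summable.tsum_eq_zero_add hs
    rw [hexp (2 * (P t - P s))]
    simp only [pow_zero, Nat.factorial_zero] at this
    rw [this]
    push_cast
    ring
  calc (∫ u in Ioc s t, 2 * β u * Real.exp (2 * (P u - P s)))
      = ∫ u in Ioc s t, ∑' k, h k u := by simp_rw [hpt]
    _ = ∑' k, ∫ u in Ioc s t, h k u := hswap
    _ = ∑' k : ℕ, (2 * (P t - P s)) ^ (k+1) / ((k+1).factorial : ℝ) := by
        exact tsum_congr hval
    _ = Real.exp (2 * (P t - P s)) - 1 := hsum2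

end

lemma main_aux (α β γ : ℝ → ℝ) (c : ℝ)
    (hαm : Measurable α) (hβm : Measurable β) (hγm : Measurable γ)
    (Mα Mβ Mγ : ℝ)
    (hαb : ∀ x, |α x| ≤ Mα) (hβb : ∀ x, |β x| ≤ Mβ) (hγb : ∀ x, |γ x| ≤ Mγ)
    (hβ0 : ∀ x, 0 ≤ β x) (hγ0 : ∀ x, 0 ≤ γ x) (hc : 0 ≤ c)
    (Pa Pb : ℝ → ℝ)
    (hPa : ∀ x, Pa x = ∫ r in (0:ℝ)..x, α r) (hPb : ∀ x, Pb x = ∫ r in (0:ℝ)..x, β r)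
    (ϑ : ℝ → ℝ)
    (hϑ' : ∀ u, ϑ u = ∫ s in Iio u,
      Real.exp (2*((Pa u + Pb u) - (Pa s + Pb s))) * (2*γ s + c))
    (hfin' : ∀ u, IntegrableOn
      (fun s => Real.exp (2*((Pa u + Pb u) - (Pa s + Pb s))) * (2*γ s + c)) (Iio u))
    (t : ℝ) :
    (∫ u in Iio t, Real.exp (2*(Pa t - Pa u)) * (2*β u * ϑ u + 2*γ u + c)) = ϑ t := by
  have hMβ0 : 0 ≤ Mβ := le_trans (abs_nonneg _) (hβb 0)
  have hPafun : Pa = fun x => ∫ r in (0:ℝ)..x, α r := funext hPa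
  have hPbfun : Pb = fun x => ∫ r in (0:ℝ)..x, β r := funext hPb
  have hPac : Continuous Pa := hPafun ▸ primitive_continuous hαm hαb
  have hPbc : Continuous Pb := hPbfun ▸ primitive_continuous hβm hβb
  have hPbmono : Monotone Pb := hPbfun ▸ primitive_mono hβm hβb hβ0
  have hPbdiff : ∀ a b : ℝ, a ≤ b → Pb b - Pb a ≤ Mβ * (b - a) := by
    intro a b hab; rw [hPb, hPb]; exact primitive_diff_le hβm hβb hab
  have hγc0 : ∀ s : ℝ, 0 ≤ 2*γ s + c := fun s => by linarith [hγ0 s]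
  have hϑ0 : ∀ u, 0 ≤ ϑ u := by
    intro u
    rw [hϑ' u]
    exact setIntegral_nonneg measurableSet_Iio fun s _ =>
      mul_nonneg (Real.exp_pos _).le (hγc0 s)
  set D : ℝ → ℝ → ℝ≥0∞ := fun u s =>
    ENNReal.ofReal (Real.exp (2*((Pa u + Pb u) - (Pa s + Pb s))) * (2*γ s + c)) with hD
  have hDm : Measurable (fun q : ℝ × ℝ => D q.1 q.2) := by
    apply Measurable.ennreal_ofReal
    have hcont : Continuous (fun q : ℝ × ℝ =>
        Real.exp (2*((Pa q.1 + Pb q.1) - (Pa q.2 + Pb q.2)))) := by fun_prop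
    exact hcont.measurable.mul
      ((measurable_const.mul (hγm.comp measurable_snd)).add_const c)
  have hΘ : ∀ u, ENNReal.ofReal (ϑ u) = ∫⁻ s in Iio u, D u s := by
    intro u
    rw [hϑ' u, ofReal_integral_eq_lintegral_ofReal (hfin' u)
      (Filter.Eventually.of_forall fun s => mul_nonneg (Real.exp_pos _).le (hγc0 s))]
  have hϑm : Measurable ϑ := by
    have hind : Measurable ({q : ℝ × ℝ | q.2 < q.1}.indicator (fun q => D q.1 q.2)) :=
      hDm.indicator (measurableSet_lt measurable_snd measurable_fst)
    have hΘm : Measurable (fun u =>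
        ∫⁻ s, ({q : ℝ × ℝ | q.2 < q.1}.indicator (fun q => D q.1 q.2)) (u, s)) :=
      Measurable.lintegral_prod_right' hind
    have heq : ϑ = fun u =>
        (∫⁻ s, ({q : ℝ × ℝ | q.2 < q.1}.indicator (fun q => D q.1 q.2)) (u, s)).toReal := by
      funext u
      have h1 : (∫⁻ s, ({q : ℝ × ℝ | q.2 < q.1}.indicator (fun q => D q.1 q.2)) (u, s))
          = ∫⁻ s in Iio u, D u s := by
        rw [← lintegral_indicator measurableSet_Iio]
        refine lintegral_congr fun s => ?_
        by_cases h : s < u <;> simp [Set.indicator_apply, h, mem_Iio]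
      rw [h1, ← hΘ u, ENNReal.toReal_ofReal (hϑ0 u)]
    rw [heq]
    exact hΘm.ennreal_toReal
  -- T2 computation
  set K : ℝ → ℝ≥0∞ := fun u => ENNReal.ofReal (Real.exp (2*(Pa t - Pa u)) * (2*β u)) with hK
  have hKm : Measurable K := by
    apply Measurable.ennreal_ofReal
    have : Continuous (fun u => Real.exp (2*(Pa t - Pa u))) := by fun_prop
    exact this.measurable.mul (measurable_const.mul hβm)
  set W : ℝ × ℝ → ℝ≥0∞ :=
    {q : ℝ × ℝ | q.2 < q.1}.indicator (fun q => K q.1 * D q.1 q.2) with hW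
  have hWm : Measurable W :=
    ((hKm.comp measurable_fst).mul hDm).indicator
      (measurableSet_lt measurable_snd measurable_fst)
  have hT2a : (∫⁻ u in Iio t, ENNReal.ofReal
        (Real.exp (2*(Pa t - Pa u)) * (2*β u * ϑ u)))
      = ∫⁻ u in Iio t, ∫⁻ s, W (u, s) := by
    refine setLIntegral_congr_fun measurableSet_Iio
      (fun u _ => ?_)
    have e1 : Real.exp (2*(Pa t - Pa u)) * (2*β u * ϑ u)
        = (Real.exp (2*(Pa t - Pa u)) * (2*β u)) * ϑ u := by ring
    have hDum : Measurable (fun s : ℝ => D u s) := by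
      simp only [hD]
      have hcont2 : Continuous (fun s : ℝ =>
          Real.exp (2*((Pa u + Pb u) - (Pa s + Pb s)))) := by fun_prop
      exact Measurable.ennreal_ofReal
        (hcont2.measurable.mul ((measurable_const.mul hγm).add_const c))
    rw [e1, ENNReal.ofReal_mul (mul_nonneg (Real.exp_pos _).le (by linarith [hβ0 u])),
      hΘ u]
    rw [← lintegral_const_mul _ hDum]
    rw [← lintegral_indicator measurableSet_Iio]
    refine lintegral_congr fun s => ?_
    by_cases h : s < u <;> simp [hW, hK, Set.indicator_apply, h, mem_Iio]
  have hswap : (∫⁻ u in Iio t, ∫⁻ s, W (u, s)) = ∫⁻ s, ∫⁻ u in Iio t, W (u, s) :=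
    lintegral_lintegral_swap (hWm.aemeasurable)
  -- value of the inner beta integral
  have hIoo : ∀ s : ℝ, s < t →
      (∫⁻ u in Ioo s t, ENNReal.ofReal (2*β u * Real.exp (2*(Pb u - Pb s))))
        = ENNReal.ofReal (Real.exp (2*(Pb t - Pb s)) - 1) := by
    intro s hs
    have hInt : IntegrableOn (fun u => 2*β u * Real.exp (2*(Pb u - Pb s))) (Ioc s t) := by
      refine bdd_on_integrableOn ?_ measurableSet_Ioc measure_Ioc_lt_top
        (C := 2*Mβ*Real.exp (2*(Mβ*(t-s)))) ?_
      · have hce : Continuous (fun u => Real.exp (2*(Pb u - Pb s))) := by fun_prop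
        exact (measurable_const.mul hβm).mul hce.measurable
      · intro u hu
        rw [abs_mul]
        have h1 : |2*β u| ≤ 2*Mβ := by
          rw [abs_mul, abs_two]
          exact mul_le_mul_of_nonneg_left (hβb u) (by norm_num)
        have h2 : |Real.exp (2*(Pb u - Pb s))| ≤ Real.exp (2*(Mβ*(t-s))) := by
          rw [abs_of_pos (Real.exp_pos _)]
          apply Real.exp_le_exp.2
          have h4 := hPbdiff s u hu.1.le
          have h3 : Pb u - Pb s ≤ Mβ*(t-s) := le_trans h4 (by nlinarith [hu.2, hMβ0])
          linarith
        exact mul_le_mul h1 h2 (abs_nonneg _) (by positivity)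
    rw [Measure.restrict_congr_set Ioo_ae_eq_Ioc,
      ← ofReal_integral_eq_lintegral_ofReal hInt (Filter.Eventually.of_forall fun u =>
        mul_nonneg (by linarith [hβ0 u]) (Real.exp_pos _).le),
      exp_id hβm hβb hβ0 Pb hPb hs.le]
  -- compute the inner integral of the swapped double integral
  have hinner : ∀ s : ℝ, (∫⁻ u in Iio t, W (u, s))
      = (Iio t).indicator (fun s => ENNReal.ofReal
          ((2*γ s + c) * Real.exp (2*(Pa t - Pa s)) * (Real.exp (2*(Pb t - Pb s)) - 1))) s := by
    intro s
    have hWs : ∀ u : ℝ, W (u, s) = (Ioi s).indicator (fun u => K u * D u s) u := by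
      intro u
      by_cases h : s < u <;> simp [hW, Set.indicator_apply, h, mem_Ioi]
    have e0 : (∫⁻ u in Iio t, W (u, s)) = ∫⁻ u in Ioo s t, K u * D u s := by
      simp_rw [hWs]
      rw [lintegral_indicator measurableSet_Ioi, Measure.restrict_restrict measurableSet_Ioi,
        Set.Ioi_inter_Iio]
    rw [e0]
    by_cases hst : s < t
    · have hcomb : ∀ u, K u * D u s
          = ENNReal.ofReal ((2*γ s + c) * Real.exp (2*(Pa t - Pa s)))
            * ENNReal.ofReal (2*β u * Real.exp (2*(Pb u - Pb s))) := by
        intro u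
        simp only [hK, hD]
        rw [← ENNReal.ofReal_mul (mul_nonneg (Real.exp_pos _).le (by linarith [hβ0 u])),
          ← ENNReal.ofReal_mul (mul_nonneg (hγc0 s) (Real.exp_pos _).le)]
        congr 1
        have hexps : Real.exp (2*(Pa t - Pa u)) * Real.exp (2*((Pa u + Pb u) - (Pa s + Pb s)))
            = Real.exp (2*(Pa t - Pa s)) * Real.exp (2*(Pb u - Pb s)) := by
          rw [← Real.exp_add, ← Real.exp_add]
          congr 1
          ring
        linear_combination (2*β u * (2*γ s + c)) * hexps
      simp_rw [hcomb]
      have hm2 : Measurable (fun u => ENNReal.ofReal (2*β u * Real.exp (2*(Pb u - Pb s)))) := by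
        apply Measurable.ennreal_ofReal
        have hce : Continuous (fun u => Real.exp (2*(Pb u - Pb s))) := by fun_prop
        exact (measurable_const.mul hβm).mul hce.measurable
      rw [lintegral_const_mul _ hm2, hIoo s hst,
        Set.indicator_of_mem (mem_Iio.2 hst),
        ← ENNReal.ofReal_mul (mul_nonneg (hγc0 s) (Real.exp_pos _).le)]
    · rw [Set.Ioo_eq_empty hst, Measure.restrict_empty, lintegral_zero_measure,
        Set.indicator_of_notMem (by simpa using hst)]
  -- T2 in closed form
  have hT2 : (∫⁻ u in Iio t, ENNReal.ofReal
        (Real.exp (2*(Pa t - Pa u)) * (2*β u * ϑ u)))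
      = ∫⁻ s in Iio t, ENNReal.ofReal
          ((2*γ s + c) * Real.exp (2*(Pa t - Pa s)) * (Real.exp (2*(Pb t - Pb s)) - 1)) := by
    rw [hT2a, hswap]
    rw [lintegral_congr hinner, lintegral_indicator measurableSet_Iio]
  -- sum identity
  have hmeasT2 : Measurable (fun s => ENNReal.ofReal
      ((2*γ s + c) * Real.exp (2*(Pa t - Pa s)) * (Real.exp (2*(Pb t - Pb s)) - 1))) := by
    apply Measurable.ennreal_ofReal
    have hc1 : Continuous (fun s => Real.exp (2*(Pa t - Pa s))) := by fun_prop
    have hc2 : Continuous (fun s => Real.exp (2*(Pb t - Pb s)) - 1) := by fun_prop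
    exact (((measurable_const.mul hγm).add_const c).mul hc1.measurable).mul hc2.measurable
  have hsum : (∫⁻ u in Iio t, ENNReal.ofReal (Real.exp (2*(Pa t - Pa u)) * (2*β u * ϑ u)))
      + (∫⁻ u in Iio t, ENNReal.ofReal (Real.exp (2*(Pa t - Pa u)) * (2*γ u + c)))
      = ENNReal.ofReal (ϑ t) := by
    rw [hT2, hΘ t, ← lintegral_add_left hmeasT2]
    refine setLIntegral_congr_fun measurableSet_Iio
      (fun s hs => ?_)
    have hB0 : 0 ≤ Real.exp (2*(Pb t - Pb s)) - 1 := by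
      have := hPbmono (le_of_lt (mem_Iio.1 hs))
      have h5 : (0:ℝ) ≤ 2*(Pb t - Pb s) := by linarith
      have := Real.one_le_exp h5
      linarith
    rw [← ENNReal.ofReal_add
      (mul_nonneg (mul_nonneg (hγc0 s) (Real.exp_pos _).le) hB0)
      (mul_nonneg (Real.exp_pos _).le (hγc0 s))]
    simp only [hD]
    congr 1
    have hexps2 : Real.exp (2*(Pa t - Pa s)) * Real.exp (2*(Pb t - Pb s))
        = Real.exp (2*((Pa t + Pb t) - (Pa s + Pb s))) := by
      rw [← Real.exp_add]
      congr 1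
      ring
    linear_combination (2*γ s + c) * hexps2
  -- final assembly
  have hnn : (0:ℝ → ℝ) ≤ᵐ[volume.restrict (Iio t)]
      (fun u => Real.exp (2*(Pa t - Pa u)) * (2*β u * ϑ u + 2*γ u + c)) :=
    Filter.Eventually.of_forall fun u => mul_nonneg (Real.exp_pos _).le
      (by have := mul_nonneg (by linarith [hβ0 u] : (0:ℝ) ≤ 2*β u) (hϑ0 u); linarith [hγ0 u])
  have hmeasF : Measurable (fun u => Real.exp (2*(Pa t - Pa u)) * (2*β u * ϑ u + 2*γ u + c)) := by
    have hc1 : Continuous (fun u => Real.exp (2*(Pa t - Pa u))) := by fun_prop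
    exact hc1.measurable.mul
      ((((measurable_const.mul hβm).mul hϑm).add (measurable_const.mul hγm)).add_const c)
  rw [integral_eq_lintegral_of_nonneg_ae hnn hmeasF.aestronglyMeasurable.restrict]
  have hmeasT2' : Measurable (fun u => ENNReal.ofReal
      (Real.exp (2*(Pa t - Pa u)) * (2*β u * ϑ u))) := by
    apply Measurable.ennreal_ofReal
    have hc1 : Continuous (fun u => Real.exp (2*(Pa t - Pa u))) := by fun_prop
    exact hc1.measurable.mul ((measurable_const.mul hβm).mul hϑm)
  have hsplit : (∫⁻ u in Iio t, ENNReal.ofReal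
        (Real.exp (2*(Pa t - Pa u)) * (2*β u * ϑ u + 2*γ u + c)))
      = (∫⁻ u in Iio t, ENNReal.ofReal (Real.exp (2*(Pa t - Pa u)) * (2*β u * ϑ u)))
        + ∫⁻ u in Iio t, ENNReal.ofReal (Real.exp (2*(Pa t - Pa u)) * (2*γ u + c)) := by
    rw [← lintegral_add_left hmeasT2']
    refine lintegral_congr fun u => ?_
    have e2 : Real.exp (2*(Pa t - Pa u)) * (2*β u * ϑ u + 2*γ u + c)
        = Real.exp (2*(Pa t - Pa u)) * (2*β u * ϑ u)
          + Real.exp (2*(Pa t - Pa u)) * (2*γ u + c) := by ring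
    rw [e2, ENNReal.ofReal_add
      (mul_nonneg (Real.exp_pos _).le
        (mul_nonneg (by linarith [hβ0 u]) (hϑ0 u)))
      (mul_nonneg (Real.exp_pos _).le (hγc0 u))]
  rw [hsplit, hsum, ENNReal.toReal_ofReal (hϑ0 t)]


/-- identity for ϑ. -/
theorem stmt0
    (α β γ : ℝ → ℝ) (c : ℝ)
    (hαm : Measurable α) (hβm : Measurable β) (hγm : Measurable γ)
    (Mα Mβ Mγ : ℝ)
    (hαb : ∀ t, |α t| ≤ Mα) (hβb : ∀ t, |β t| ≤ Mβ) (hγb : ∀ t, |γ t| ≤ Mγ)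
    (hβ0 : ∀ t, 0 ≤ β t) (hγ0 : ∀ t, 0 ≤ γ t) (hc : 0 ≤ c)
    (ϑ : ℝ → ℝ)
    (hϑ : ∀ t, ϑ t = ∫ u in Iio t,
      Real.exp (2 * ∫ r in u..t, (α r + β r)) * (2 * γ u + c))
    (hfin : ∀ t, IntegrableOn
      (fun u => Real.exp (2 * ∫ r in u..t, (α r + β r)) * (2 * γ u + c)) (Iio t)) :
    ∀ t, (∫ u in Iio t,
      Real.exp (2 * ∫ r in u..t, α r) * (2 * β u * ϑ u + 2 * γ u + c)) = ϑ t := by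
  intro t
  have hσm : Measurable (fun r => α r + β r) := hαm.add hβm
  have hσb : ∀ x, |α x + β x| ≤ Mα + Mβ :=
    fun x => (abs_add_le _ _).trans (add_le_add (hαb x) (hβb x))
  have hPs : ∀ x : ℝ, (∫ r in (0:ℝ)..x, (α r + β r))
      = (∫ r in (0:ℝ)..x, α r) + ∫ r in (0:ℝ)..x, β r := fun x =>
    intervalIntegral.integral_add (bdd_intervalIntegrable hαm hαb 0 x)
      (bdd_intervalIntegrable hβm hβb 0 x)
  have hσsub : ∀ s u : ℝ, (∫ r in s..u, (α r + β r))
      = ((∫ r in (0:ℝ)..u, α r) + (∫ r in (0:ℝ)..u, β r))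
        - ((∫ r in (0:ℝ)..s, α r) + (∫ r in (0:ℝ)..s, β r)) := by
    intro s u
    rw [primitive_sub hσm hσb s u, hPs, hPs]
  have hαsub : ∀ u t' : ℝ, (∫ r in u..t', α r)
      = (∫ r in (0:ℝ)..t', α r) - ∫ r in (0:ℝ)..u, α r := fun u t' =>
    primitive_sub hαm hαb u t'
  have hϑ' : ∀ u, ϑ u = ∫ s in Iio u,
      Real.exp (2*(((∫ r in (0:ℝ)..u, α r) + (∫ r in (0:ℝ)..u, β r))
        - ((∫ r in (0:ℝ)..s, α r) + (∫ r in (0:ℝ)..s, β r)))) * (2*γ s + c) := by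
    intro u
    rw [hϑ u]
    exact setIntegral_congr_fun measurableSet_Iio fun s _ => by rw [hσsub s u]
  have hfin' : ∀ u, IntegrableOn (fun s =>
      Real.exp (2*(((∫ r in (0:ℝ)..u, α r) + (∫ r in (0:ℝ)..u, β r))
        - ((∫ r in (0:ℝ)..s, α r) + (∫ r in (0:ℝ)..s, β r)))) * (2*γ s + c)) (Iio u) := by
    intro u
    have he : (fun s => Real.exp (2 * ∫ r in s..u, (α r + β r)) * (2 * γ s + c))
        = fun s => Real.exp (2*(((∫ r in (0:ℝ)..u, α r) + (∫ r in (0:ℝ)..u, β r))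
          - ((∫ r in (0:ℝ)..s, α r) + (∫ r in (0:ℝ)..s, β r)))) * (2*γ s + c) :=
      funext fun s => by rw [hσsub s u]
    exact he ▸ hfin u
  have H := main_aux α β γ c hαm hβm hγm Mα Mβ Mγ hαb hβb hγb hβ0 hγ0 hc
    (fun x => ∫ r in (0:ℝ)..x, α r) (fun x => ∫ r in (0:ℝ)..x, β r)
    (fun _ => rfl) (fun _ => rfl) ϑ hϑ' hfin' t
  refine Eq.trans (setIntegral_congr_fun measurableSet_Iio fun u _ => ?_) H
  rw [hαsub u t]
end

section
/- Let α, β : ℝ → ℝ be bounded measurable functions and suppose there exist l > 0 and a > 0 such that ∫_t^{t+l} (α_r + β_r) dr ≤ -a for all t ∈ ℝ. Let γ : ℝ → ℝ be bounded nonnegative and c ≥ 0. Then sup_{t∈ℝ} ∫_{-∞}^t exp(2∫_u^t (α_r+β_r) dr) (2γ_u + c) du ≤ e^{4lM}(2M + c)l / (1 - e^{-2a}), where M = max(‖α‖_∞, ‖β‖_∞, ‖γ‖_∞). In particular this supremum is finite. -/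
open MeasureTheory Real Set

lemma aux_intInt {f : ℝ → ℝ} {K : ℝ} (hfm : Measurable f) (hfb : ∀ r, |f r| ≤ K)
    (u v : ℝ) : IntervalIntegrable f volume u v := by
  constructor <;>
  · refine Integrable.mono' (g := fun _ => K)
      (integrableOn_const measure_Ioc_lt_top.ne) hfm.aestronglyMeasurable.restrict
      (ae_of_all _ fun x => ?_)
    simpa using hfb x

lemma aux_short {f : ℝ → ℝ} {K : ℝ} (hfm : Measurable f) (hfb : ∀ r, |f r| ≤ K)
    {u v l : ℝ} (hK : 0 ≤ K) (huv : u ≤ v) (hvl : v - u ≤ l) :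
    (∫ r in u..v, f r) ≤ K * l := by
  have h1 : (∫ r in u..v, f r) ≤ ∫ r in u..v, K := by
    apply intervalIntegral.integral_mono_on huv (aux_intInt hfm hfb u v)
      intervalIntegrable_const
    intro x _; exact (abs_le.1 (hfb x)).2
  rw [intervalIntegral.integral_const] at h1
  calc (∫ r in u..v, f r) ≤ (v - u) * K := by simpa using h1
    _ ≤ l * K := by nlinarith
    _ = K * l := mul_comm _ _

lemma aux_steps {f : ℝ → ℝ} {K l a : ℝ} (hfm : Measurable f) (hfb : ∀ r, |f r| ≤ K)
    (hdiss : ∀ t, (∫ r in t..(t+l), f r) ≤ -a) (n : ℕ) (u : ℝ) :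
    (∫ r in u..(u + n*l), f r) ≤ -(n*a) := by
  induction n generalizing u with
  | zero => simp
  | succ n ih =>
    have he : u + ((n:ℕ)+1:ℝ)*l = u + n*l + l := by ring
    push_cast
    rw [he, ← intervalIntegral.integral_add_adjacent_intervals
      (aux_intInt hfm hfb u (u + n*l)) (aux_intInt hfm hfb (u + n*l) (u + n*l + l))]
    have h1 := ih u
    have h2 := hdiss (u + n*l)
    push_cast at h1 ⊢
    linarith

/-- uniform bound on ϑ under averaged dissipativity. -/
theorem stmt1
    (α β γ : ℝ → ℝ) (c : ℝ) (l a M : ℝ)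
    (hl : 0 < l) (ha : 0 < a)
    (hαm : Measurable α) (hβm : Measurable β) (hγm : Measurable γ)
    (hαb : ∀ t, |α t| ≤ M) (hβb : ∀ t, |β t| ≤ M) (hγb : ∀ t, |γ t| ≤ M)
    (hγ0 : ∀ t, 0 ≤ γ t) (hc : 0 ≤ c)
    (hdiss : ∀ t : ℝ, (∫ r in t..(t + l), (α r + β r)) ≤ -a) :
    ∀ t : ℝ,
      (∫⁻ u in Iio t, ENNReal.ofReal
          (Real.exp (2 * ∫ r in u..t, (α r + β r)) * (2 * γ u + c)))
        ≤ ENNReal.ofReal (Real.exp (4 * l * M) * (2 * M + c) * l / (1 - Real.exp (-2 * a))) := by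
  intro t
  have hM0 : 0 ≤ M := le_trans (abs_nonneg _) (hαb 0)
  have hfm : Measurable (fun r => α r + β r) := hαm.add hβm
  have hfb : ∀ r, |α r + β r| ≤ 2 * M := fun r => by
    have h1 := abs_add_le (α r) (β r); have h2 := hαb r; have h3 := hβb r; linarith
  set C := Real.exp (4 * l * M) * (2 * M + c) with hCdef
  set r := Real.exp (-2 * a) with hrdef
  have hC0 : 0 ≤ C := mul_nonneg (Real.exp_pos _).le (by linarith)
  have hr0 : 0 < r := Real.exp_pos _
  have hr1 : r < 1 := by rw [hrdef, Real.exp_lt_one_iff]; linarith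
  -- pointwise bound on each piece
  have hpiece : ∀ (n : ℕ) (u : ℝ), u ∈ Ico (t - (n + 1) * l) (t - n * l) →
      Real.exp (2 * ∫ s in u..t, (α s + β s)) * (2 * γ u + c) ≤ C * r ^ n := by
    intro n u hu
    obtain ⟨h1, h2⟩ := hu
    have hun : u + n * l ≤ t := by linarith
    have hut : t - (u + n * l) ≤ l := by linarith
    have hsplit : (∫ s in u..t, (α s + β s))
        = (∫ s in u..(u + n * l), (α s + β s)) + ∫ s in (u + n * l)..t, (α s + β s) :=
      (intervalIntegral.integral_add_adjacent_intervals (aux_intInt hfm hfb _ _)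
        (aux_intInt hfm hfb _ _)).symm
    have hb1 := aux_steps hfm hfb hdiss n u
    have hb2 : (∫ s in (u + n * l)..t, (α s + β s)) ≤ (2 * M) * l :=
      aux_short hfm hfb (by linarith) hun hut
    have hIb : (∫ s in u..t, (α s + β s)) ≤ -((n : ℝ) * a) + 2 * M * l := by
      rw [hsplit]; linarith
    have hexp : Real.exp (2 * ∫ s in u..t, (α s + β s)) ≤ Real.exp (4 * l * M) * r ^ n := by
      have key : Real.exp (2 * ∫ s in u..t, (α s + β s))
          ≤ Real.exp (4 * l * M + (n : ℝ) * (-2 * a)) := by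
        apply Real.exp_le_exp.2
        have he : 4 * l * M + (n : ℝ) * (-2 * a) = 2 * (-((n : ℝ) * a) + 2 * M * l) := by ring
        rw [he]; linarith
      rwa [Real.exp_add, Real.exp_nat_mul] at key
    have hfac : 2 * γ u + c ≤ 2 * M + c := by
      have := (abs_le.1 (hγb u)).2; linarith
    calc Real.exp (2 * ∫ s in u..t, (α s + β s)) * (2 * γ u + c)
        ≤ (Real.exp (4 * l * M) * r ^ n) * (2 * M + c) := by
          apply mul_le_mul hexp hfac (by linarith [hγ0 u]) (by positivity)
      _ = C * r ^ n := by rw [hCdef]; ring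
  -- covering
  have hcov : Iio t ⊆ ⋃ n : ℕ, Ico (t - (n + 1) * l) (t - n * l) := by
    intro x hx
    have hxt : x < t := hx
    have hd0 : 0 < (t - x) / l := div_pos (by linarith) hl
    obtain ⟨m, hm⟩ : ∃ m, Nat.ceil ((t - x) / l) = m + 1 :=
      ⟨Nat.ceil ((t - x) / l) - 1, by
        have := Nat.one_le_ceil_iff.2 hd0; omega⟩
    refine mem_iUnion.2 ⟨m, ?_, ?_⟩
    · have h := Nat.le_ceil ((t - x) / l)
      rw [hm] at h; push_cast at h
      have h2 := (div_le_iff₀ hl).1 h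
      linarith
    · have h : (m : ℝ) < (t - x) / l := Nat.lt_ceil.1 (by omega)
      have h2 := (lt_div_iff₀ hl).1 h
      linarith
  -- main computation
  calc (∫⁻ u in Iio t, ENNReal.ofReal
          (Real.exp (2 * ∫ s in u..t, (α s + β s)) * (2 * γ u + c)))
      ≤ ∫⁻ u in ⋃ n : ℕ, Ico (t - (n + 1) * l) (t - n * l), ENNReal.ofReal
          (Real.exp (2 * ∫ s in u..t, (α s + β s)) * (2 * γ u + c)) :=
        lintegral_mono_set hcov
    _ ≤ ∑' n : ℕ, ∫⁻ u in Ico (t - (n + 1) * l) (t - n * l), ENNReal.ofReal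
          (Real.exp (2 * ∫ s in u..t, (α s + β s)) * (2 * γ u + c)) :=
        lintegral_iUnion_le _ _
    _ ≤ ∑' n : ℕ, ENNReal.ofReal C * ENNReal.ofReal r ^ n * ENNReal.ofReal l := by
        refine ENNReal.tsum_le_tsum fun n => ?_
        calc (∫⁻ u in Ico (t - (n + 1) * l) (t - n * l), ENNReal.ofReal
              (Real.exp (2 * ∫ s in u..t, (α s + β s)) * (2 * γ u + c)))
            ≤ ∫⁻ _ in Ico (t - (n + 1) * l) (t - n * l), ENNReal.ofReal (C * r ^ n) :=
              setLIntegral_mono' measurableSet_Ico fun u hu =>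
                ENNReal.ofReal_le_ofReal (hpiece n u hu)
          _ = ENNReal.ofReal (C * r ^ n) * volume (Ico (t - (n + 1) * l) (t - n * l)) :=
              setLIntegral_const _ _
          _ = ENNReal.ofReal C * ENNReal.ofReal r ^ n * ENNReal.ofReal l := by
              rw [Real.volume_Ico, show t - n * l - (t - (n + 1) * l) = l by ring,
                ENNReal.ofReal_mul hC0, ENNReal.ofReal_pow hr0.le]
    _ = ENNReal.ofReal C * ENNReal.ofReal l * (∑' n : ℕ, ENNReal.ofReal r ^ n) := by
        rw [← ENNReal.tsum_mul_left]
        exact tsum_congr fun n => by ring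
    _ = ENNReal.ofReal C * ENNReal.ofReal l * (1 - ENNReal.ofReal r)⁻¹ := by
        rw [ENNReal.tsum_geometric]
    _ = ENNReal.ofReal (C * l / (1 - r)) := by
        rw [div_eq_mul_inv, ENNReal.ofReal_mul (mul_nonneg hC0 hl.le),
          ENNReal.ofReal_mul hC0, ENNReal.ofReal_inv_of_pos (by linarith : (0:ℝ) < 1 - r),
          ENNReal.ofReal_sub 1 hr0.le, ENNReal.ofReal_one]
    _ = ENNReal.ofReal (Real.exp (4 * l * M) * (2 * M + c) * l / (1 - Real.exp (-2 * a))) := by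
        rw [hCdef, hrdef]
end
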